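/- arXiv:2001.01373 — 2 statements merged into one kernel-verified Lean document; each statement's English description precedes it below -/
import Mathlib

section
/- The tempered posterior interpolates in KL divergence monotonically toward the full posterior in the exponent β: for fixed positive likelihood f, prior p, and full posterior π₁ = f·p/Z(1), the map β ↦ D_KL(π₁ ‖ π_β) is nonincreasing on [0,1], where π_β = f^β p / Z(β). -/
/-- The KL divergence from the full posterior to the tempered posterior is
nonincreasing in the annealing exponent β on [0,1]. -/
theorem tempered_KL_antitone {Θ : Type*} [Fintype Θ]
    (p f : Θ → ℝ) (hp_pos : ∀ θ, 0 < p θ) (hp_sum : ∑ θ, p θ = 1)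
    (hf_pos : ∀ θ, 0 < f θ) :
    AntitoneOn
      (fun β : ℝ => ∑ θ,
        (f θ ^ (1 : ℝ) * p θ / ∑ θ', f θ' ^ (1 : ℝ) * p θ') *
          Real.log ((f θ ^ (1 : ℝ) * p θ / ∑ θ', f θ' ^ (1 : ℝ) * p θ') /
            (f θ ^ β * p θ / ∑ θ', f θ' ^ β * p θ')))
      (Set.Icc 0 1) := by
  have hne : Nonempty Θ := by
    rcases isEmpty_or_nonempty Θ with h | h
    · simp at hp_sum
    · exact h
  set S : ℝ → ℝ := fun β => ∑ θ, f θ ^ β * p θ with hS_def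
  have hS : ∀ β, 0 < S β := fun β =>
    Finset.sum_pos (fun θ _ => mul_pos (Real.rpow_pos_of_pos (hf_pos θ) β) (hp_pos θ))
      Finset.univ_nonempty
  set m : ℝ → ℝ := fun b => ∑ θ, f θ ^ b * p θ / S b * Real.log (f θ) with hm_def
  have hwsum : ∀ b : ℝ, ∑ θ, f θ ^ b * p θ / S b = 1 := by
    intro b
    rw [← Finset.sum_div]
    exact div_self (hS b).ne'
  -- tangent line inequality from Jensen
  have key : ∀ a b : ℝ, (a - b) * m b ≤ Real.log (S a) - Real.log (S b) := by
    intro a b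
    have hw0 : ∀ θ ∈ Finset.univ, (0:ℝ) ≤ f θ ^ b * p θ / S b := fun θ _ =>
      div_nonneg (mul_pos (Real.rpow_pos_of_pos (hf_pos θ) b) (hp_pos θ)).le (hS b).le
    have hjen := convexOn_exp.map_sum_le (t := Finset.univ)
      (w := fun θ => f θ ^ b * p θ / S b) (p := fun θ => (a - b) * Real.log (f θ))
      hw0 (hwsum b) (fun _ _ => Set.mem_univ _)
    have hL : (∑ θ, (f θ ^ b * p θ / S b) • ((a - b) * Real.log (f θ))) = (a - b) * m b := by
      rw [hm_def, Finset.mul_sum]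
      exact Finset.sum_congr rfl fun θ _ => by simp [smul_eq_mul]; ring
    have hR : (∑ θ, (f θ ^ b * p θ / S b) • Real.exp ((a - b) * Real.log (f θ)))
        = S a / S b := by
      rw [hS_def, Finset.sum_div]
      refine Finset.sum_congr rfl fun θ _ => ?_
      have he : Real.exp ((a - b) * Real.log (f θ)) = f θ ^ (a - b) := by
        rw [Real.rpow_def_of_pos (hf_pos θ), mul_comm]
      rw [smul_eq_mul, he]
      have : f θ ^ b * f θ ^ (a - b) = f θ ^ a := by
        rw [← Real.rpow_add (hf_pos θ)]; ring_nf
      field_simp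
      rw [mul_comm (f θ ^ b) (p θ), mul_assoc, this, mul_comm]
    rw [hL, hR] at hjen
    have hlog := Real.log_le_log (Real.exp_pos _) hjen
    rwa [Real.log_exp, Real.log_div (hS a).ne' (hS b).ne'] at hlog
  -- closed form of the KL divergence
  have hform : ∀ β : ℝ, (∑ θ,
        (f θ ^ (1 : ℝ) * p θ / ∑ θ', f θ' ^ (1 : ℝ) * p θ') *
          Real.log ((f θ ^ (1 : ℝ) * p θ / ∑ θ', f θ' ^ (1 : ℝ) * p θ') /
            (f θ ^ β * p θ / ∑ θ', f θ' ^ β * p θ')))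
      = (1 - β) * m 1 + (Real.log (S β) - Real.log (S 1)) := by
    intro β
    have hstep : ∀ θ : Θ, (f θ ^ (1 : ℝ) * p θ / ∑ θ', f θ' ^ (1 : ℝ) * p θ') *
          Real.log ((f θ ^ (1 : ℝ) * p θ / ∑ θ', f θ' ^ (1 : ℝ) * p θ') /
            (f θ ^ β * p θ / ∑ θ', f θ' ^ β * p θ'))
        = (f θ ^ (1 : ℝ) * p θ / S 1) *
            ((1 - β) * Real.log (f θ) + (Real.log (S β) - Real.log (S 1))) := by
      intro θ
      have hrat : (f θ ^ (1 : ℝ) * p θ / S 1) / (f θ ^ β * p θ / S β)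
          = f θ ^ ((1 : ℝ) - β) * (S β / S 1) := by
        have h2 : p θ ≠ 0 := (hp_pos θ).ne'
        rw [Real.rpow_sub (hf_pos θ),
          show (f θ ^ (1:ℝ) * p θ / S 1) / (f θ ^ β * p θ / S β)
            = (f θ ^ (1:ℝ) / f θ ^ β) * (p θ / p θ) * (S β / S 1) from by
            simp only [div_eq_mul_inv, mul_inv, inv_inv]; ring,
          div_self h2, mul_one]
      show (f θ ^ (1 : ℝ) * p θ / S 1) *
          Real.log ((f θ ^ (1 : ℝ) * p θ / S 1) / (f θ ^ β * p θ / S β)) = _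
      rw [hrat, Real.log_mul (Real.rpow_pos_of_pos (hf_pos θ) _).ne'
          (div_pos (hS β) (hS 1)).ne', Real.log_rpow (hf_pos θ),
        Real.log_div (hS β).ne' (hS 1).ne']
    calc (∑ θ, (f θ ^ (1 : ℝ) * p θ / ∑ θ', f θ' ^ (1 : ℝ) * p θ') *
          Real.log ((f θ ^ (1 : ℝ) * p θ / ∑ θ', f θ' ^ (1 : ℝ) * p θ') /
            (f θ ^ β * p θ / ∑ θ', f θ' ^ β * p θ')))
        = ∑ θ, ((1 - β) * (f θ ^ (1:ℝ) * p θ / S 1 * Real.log (f θ))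
            + (f θ ^ (1:ℝ) * p θ / S 1) * (Real.log (S β) - Real.log (S 1))) := by
          refine Finset.sum_congr rfl fun θ _ => ?_
          rw [hstep θ]; ring
      _ = (1 - β) * m 1 + (Real.log (S β) - Real.log (S 1)) := by
          rw [Finset.sum_add_distrib, ← Finset.mul_sum, ← Finset.sum_mul, hwsum 1, hm_def,
            one_mul]
  intro b1 hb1 b2 hb2 hb
  simp only [hform]
  -- need: log S b2 - log S b1 ≤ (b2 - b1) * m 1
  have h1 : Real.log (S b2) - Real.log (S b1) ≤ (b2 - b1) * m b2 := by
    have := key b1 b2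
    linarith
  have h2 : (b2 - b1) * m b2 ≤ (b2 - b1) * m 1 := by
    rcases eq_or_lt_of_le hb2.2 with h1' | h1'
    · rw [h1']
    · have k1 := key 1 b2
      have k2 := key b2 1
      have hm : m b2 ≤ m 1 := by nlinarith
      exact mul_le_mul_of_nonneg_left hm (by linarith)
  linarith
end

section
/- Monotonicity of weight variance in the tempering increment: for a fixed finite set of positive likelihood values f₁,…,f_N not all equal, the coefficient of variation of the weights w_i(Δ) = f_i^Δ is strictly increasing in Δ on (0,∞), so the equation COV(Δ) = κ has at most one solution for each κ > 0. -/
open Finset Real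

lemma cov_pair_identity {N : ℕ} (x g : Fin N → ℝ) :
    ∑ i, ∑ j, (g i - g j) * (x i - x j) * (x i * x j)
      = 2 * ((∑ i, x i ^ 2 * g i) * (∑ i, x i) - (∑ i, x i * g i) * (∑ i, x i ^ 2)) := by
  have h : ∀ i : Fin N, ∑ j, (g i - g j) * (x i - x j) * (x i * x j)
      = x i ^ 2 * g i * (∑ j, x j) + x i * (∑ j, x j ^ 2 * g j)
        - (x i * g i * (∑ j, x j ^ 2) + x i ^ 2 * (∑ j, x j * g j)) := by
    intro i
    rw [Finset.mul_sum, Finset.mul_sum, Finset.mul_sum, Finset.mul_sum,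
      ← Finset.sum_add_distrib, ← Finset.sum_add_distrib, ← Finset.sum_sub_distrib]
    exact Finset.sum_congr rfl fun j _ => by ring
  rw [Finset.sum_congr rfl fun i _ => h i, Finset.sum_sub_distrib, Finset.sum_add_distrib,
    Finset.sum_add_distrib, ← Finset.sum_mul, ← Finset.sum_mul, ← Finset.sum_mul,
    ← Finset.sum_mul]
  ring

/-- The coefficient of variation of tempering weights `w i = f i ^ Δ` is strictly
increasing in Δ on (0,∞), so `COV Δ = κ` has at most one solution for each κ > 0. -/
theorem cov_strictMono {N : ℕ} (f : Fin N → ℝ) (hf : ∀ i, 0 < f i)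
    (hne : ∃ i j, f i ≠ f j) :
    StrictMonoOn
      (fun Δ : ℝ =>
        Real.sqrt ((1 / N) * ∑ i, (f i ^ Δ - (1 / N) * ∑ i', f i' ^ Δ) ^ 2) /
          ((1 / N) * ∑ i, f i ^ Δ))
      (Set.Ioi 0) ∧
    ∀ κ : ℝ, 0 < κ → ∀ Δ₁ ∈ Set.Ioi (0 : ℝ), ∀ Δ₂ ∈ Set.Ioi (0 : ℝ),
      Real.sqrt ((1 / N) * ∑ i, (f i ^ Δ₁ - (1 / N) * ∑ i', f i' ^ Δ₁) ^ 2) /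
          ((1 / N) * ∑ i, f i ^ Δ₁) = κ →
      Real.sqrt ((1 / N) * ∑ i, (f i ^ Δ₂ - (1 / N) * ∑ i', f i' ^ Δ₂) ^ 2) /
          ((1 / N) * ∑ i, f i ^ Δ₂) = κ →
      Δ₁ = Δ₂ := by
  obtain ⟨i0, j0, hij⟩ := hne
  have hN : 0 < N := i0.pos
  have hNR : (0:ℝ) < N := by exact_mod_cast hN
  set S : ℝ → ℝ := fun t => ∑ i, f i ^ t with hSdef
  set S' : ℝ → ℝ := fun t => ∑ i, f i ^ t * Real.log (f i) with hS'def
  have hSpos : ∀ t, 0 < S t := fun t =>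
    Finset.sum_pos (fun i _ => Real.rpow_pos_of_pos (hf i) t) ⟨i0, Finset.mem_univ i0⟩
  have hSd : ∀ t, HasDerivAt S (S' t) t := fun t =>
    HasDerivAt.fun_sum fun i _ => (Real.hasStrictDerivAt_const_rpow (hf i) t).hasDerivAt
  -- the square relation
  have hx2 : ∀ (Δ : ℝ) (i : Fin N), f i ^ (2*Δ) = (f i ^ Δ) ^ 2 := by
    intro Δ i
    rw [two_mul, Real.rpow_add (hf i), sq]
  -- key inequality
  have key : ∀ Δ : ℝ, 0 < Δ → S (2*Δ) * S' Δ < S' (2*Δ) * S Δ := by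
    intro Δ hΔ
    set x : Fin N → ℝ := fun i => f i ^ Δ with hxdef
    set g : Fin N → ℝ := fun i => Real.log (f i) with hgdef
    have hS2 : S (2*Δ) = ∑ i, x i ^ 2 := Finset.sum_congr rfl fun i _ => hx2 Δ i
    have hS'2 : S' (2*Δ) = ∑ i, x i ^ 2 * g i :=
      Finset.sum_congr rfl fun i _ => by rw [hx2 Δ i]
    have hterm : ∀ i j : Fin N, 0 ≤ (g i - g j) * (x i - x j) * (x i * x j) := by
      intro i j
      have hxx : 0 < x i * x j :=
        mul_pos (Real.rpow_pos_of_pos (hf i) Δ) (Real.rpow_pos_of_pos (hf j) Δ)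
      rcases lt_trichotomy (f i) (f j) with h | h | h
      · have h1 : g i - g j < 0 := sub_neg.2 (Real.log_lt_log (hf i) h)
        have h2 : x i - x j < 0 := sub_neg.2 (Real.rpow_lt_rpow (hf i).le h hΔ)
        have := mul_pos_of_neg_of_neg h1 h2
        positivity
      · simp [hgdef, hxdef, h]
      · have h1 : 0 < g i - g j := sub_pos.2 (Real.log_lt_log (hf j) h)
        have h2 : 0 < x i - x j := sub_pos.2 (Real.rpow_lt_rpow (hf j).le h hΔ)
        positivity
    have htpos : 0 < (g i0 - g j0) * (x i0 - x j0) * (x i0 * x j0) := by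
      have hxx : 0 < x i0 * x j0 :=
        mul_pos (Real.rpow_pos_of_pos (hf i0) Δ) (Real.rpow_pos_of_pos (hf j0) Δ)
      rcases lt_trichotomy (f i0) (f j0) with h | h | h
      · have h1 : g i0 - g j0 < 0 := sub_neg.2 (Real.log_lt_log (hf i0) h)
        have h2 : x i0 - x j0 < 0 := sub_neg.2 (Real.rpow_lt_rpow (hf i0).le h hΔ)
        have := mul_pos_of_neg_of_neg h1 h2
        positivity
      · exact absurd h hij
      · have h1 : 0 < g i0 - g j0 := sub_pos.2 (Real.log_lt_log (hf j0) h)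
        have h2 : 0 < x i0 - x j0 := sub_pos.2 (Real.rpow_lt_rpow (hf j0).le h hΔ)
        positivity
    have hA : 0 < ∑ i, ∑ j, (g i - g j) * (x i - x j) * (x i * x j) := by
      refine Finset.sum_pos' (fun i _ => Finset.sum_nonneg fun j _ => hterm i j)
        ⟨i0, Finset.mem_univ i0, Finset.sum_pos' (fun j _ => hterm i0 j)
          ⟨j0, Finset.mem_univ j0, htpos⟩⟩
    have hid := cov_pair_identity x g
    rw [hid] at hA
    have : 0 < (∑ i, x i ^ 2 * g i) * (∑ i, x i) - (∑ i, x i * g i) * (∑ i, x i ^ 2) := by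
      linarith
    rw [hS2, hS'2]
    show (∑ i, x i ^ 2) * S' Δ < (∑ i, x i ^ 2 * g i) * S Δ
    have hSx : S Δ = ∑ i, x i := rfl
    have hS'x : S' Δ = ∑ i, x i * g i := rfl
    rw [hSx, hS'x]
    linarith
  -- G and its derivative
  set G : ℝ → ℝ := fun Δ => S (2*Δ) / (S Δ) ^ 2 with hGdef
  have hGd : ∀ Δ : ℝ, HasDerivAt G
      ((S' (2*Δ) * 2 * (S Δ) ^ 2 - S (2*Δ) * (2 * S Δ * S' Δ)) / ((S Δ) ^ 2) ^ 2) Δ := by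
    intro Δ
    have h1 : HasDerivAt (fun u : ℝ => S (2*u)) (S' (2*Δ) * 2) Δ := by
      have := (hSd (2*Δ)).comp Δ ((hasDerivAt_id Δ).const_mul 2)
      simp at this
      exact this
    have h2 : HasDerivAt (fun u : ℝ => (S u) ^ 2) (2 * S Δ * S' Δ) Δ := by
      have := (hSd Δ).pow 2
      simp [mul_comm] at this
      exact this
    exact h1.div h2 (pow_ne_zero 2 (hSpos Δ).ne')
  have hGmono : StrictMonoOn G (Set.Ioi 0) := by
    refine strictMonoOn_of_deriv_pos (convex_Ioi 0)
      (fun x _ => (hGd x).differentiableAt.continuousAt.continuousWithinAt) ?_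
    intro x hx
    rw [interior_Ioi] at hx
    rw [(hGd x).deriv]
    have hk := key x hx
    have hS0 := hSpos x
    have hnum : 0 < S' (2*x) * 2 * (S x) ^ 2 - S (2*x) * (2 * S x * S' x) := by nlinarith
    exact div_pos hnum (by positivity)
  -- rewrite COV
  have hcov : ∀ Δ : ℝ,
      Real.sqrt ((1 / N) * ∑ i, (f i ^ Δ - (1 / N) * ∑ i', f i' ^ Δ) ^ 2) /
        ((1 / N) * ∑ i, f i ^ Δ)
      = Real.sqrt ((N:ℝ) * G Δ - 1) := by
    intro Δ
    set m : ℝ := (1 / N) * ∑ i', f i' ^ Δ with hmdef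
    have hm : m = S Δ / N := by rw [hmdef]; ring
    have hmpos : 0 < m := by rw [hm]; exact div_pos (hSpos Δ) hNR
    set V : ℝ := (1 / N) * ∑ i, (f i ^ Δ - m) ^ 2 with hVdef
    have hVnn : 0 ≤ V := by
      apply mul_nonneg (by positivity)
      exact Finset.sum_nonneg fun i _ => sq_nonneg _
    have hexp : ∑ i, (f i ^ Δ - m) ^ 2 = S (2*Δ) - (S Δ) ^ 2 / N := by
      have h1 : ∀ i : Fin N, (f i ^ Δ - m) ^ 2 = (f i ^ Δ) ^ 2 - 2 * m * f i ^ Δ + m ^ 2 :=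
        fun i => by ring
      rw [Finset.sum_congr rfl fun i _ => h1 i, Finset.sum_add_distrib,
        Finset.sum_sub_distrib, ← Finset.mul_sum, Finset.sum_const, Finset.card_univ,
        Fintype.card_fin, nsmul_eq_mul]
      have h2 : S (2*Δ) = ∑ i, (f i ^ Δ) ^ 2 := Finset.sum_congr rfl fun i _ => hx2 Δ i
      rw [h2, hm]
      show (∑ i, (f i ^ Δ)^2) - 2 * (S Δ / N) * S Δ + (N:ℝ) * (S Δ / N) ^ 2
        = (∑ i, (f i ^ Δ)^2) - (S Δ) ^ 2 / N
      field_simp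
      ring
    have hVval : V = (S (2*Δ) - (S Δ) ^ 2 / N) / N := by rw [hVdef, hexp]; ring
    have hratio : V / m ^ 2 = (N:ℝ) * G Δ - 1 := by
      rw [hVval, hm, hGdef]
      have hS0 : S Δ ≠ 0 := (hSpos Δ).ne'
      field_simp
    rw [show Real.sqrt V / m = Real.sqrt (V / m ^ 2) by
        rw [Real.sqrt_div hVnn, Real.sqrt_sq hmpos.le], hratio]
  have hnn : ∀ Δ : ℝ, 0 ≤ (N:ℝ) * G Δ - 1 := by
    intro Δ
    set m : ℝ := (1 / N) * ∑ i', f i' ^ Δ with hmdef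
    have hmpos : 0 < m := by
      rw [hmdef]
      have := hSpos Δ
      positivity
    set V : ℝ := (1 / N) * ∑ i, (f i ^ Δ - m) ^ 2 with hVdef
    have hVnn : 0 ≤ V :=
      mul_nonneg (by positivity) (Finset.sum_nonneg fun i _ => sq_nonneg _)
    -- reuse hcov: sqrt(N G - 1) = sqrt V / m ≥ 0 is not enough; redo ratio
    have hexp : ∑ i, (f i ^ Δ - m) ^ 2 = S (2*Δ) - (S Δ) ^ 2 / N := by
      have h1 : ∀ i : Fin N, (f i ^ Δ - m) ^ 2 = (f i ^ Δ) ^ 2 - 2 * m * f i ^ Δ + m ^ 2 :=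
        fun i => by ring
      have hm : m = S Δ / N := by rw [hmdef]; ring
      rw [Finset.sum_congr rfl fun i _ => h1 i, Finset.sum_add_distrib,
        Finset.sum_sub_distrib, ← Finset.mul_sum, Finset.sum_const, Finset.card_univ,
        Fintype.card_fin, nsmul_eq_mul]
      have h2 : S (2*Δ) = ∑ i, (f i ^ Δ) ^ 2 := Finset.sum_congr rfl fun i _ => hx2 Δ i
      rw [h2, hm]
      field_simp
      ring
    have hm : m = S Δ / N := by rw [hmdef]; ring
    have hVval : V = (S (2*Δ) - (S Δ) ^ 2 / N) / N := by rw [hVdef, hexp]; ring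
    have hratio : V / m ^ 2 = (N:ℝ) * G Δ - 1 := by
      rw [hVval, hm, hGdef]
      have hS0 : S Δ ≠ 0 := (hSpos Δ).ne'
      field_simp
    rw [← hratio]
    positivity
  have hmain : StrictMonoOn
      (fun Δ : ℝ =>
        Real.sqrt ((1 / N) * ∑ i, (f i ^ Δ - (1 / N) * ∑ i', f i' ^ Δ) ^ 2) /
          ((1 / N) * ∑ i, f i ^ Δ)) (Set.Ioi 0) := by
    intro a ha b hb hab
    simp only [hcov a, hcov b]
    apply Real.sqrt_lt_sqrt (hnn a)
    have := hGmono ha hb hab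
    have : (N:ℝ) * G a < (N:ℝ) * G b := by
      exact mul_lt_mul_of_pos_left this hNR
    linarith
  refine ⟨hmain, ?_⟩
  intro κ hκ Δ₁ hΔ₁ Δ₂ hΔ₂ h1 h2
  exact hmain.injOn hΔ₁ hΔ₂ (h1.trans h2.symm)
end
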